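/- Let N ≥ 2, α ∈ (0,1), β ∈ (α,1), λ* > 0 and τ₁ := 1/(6λ*). Then there exists a constant c > 0, depending only on N, α, β and λ*, such that for every τ ∈ (−τ₁,τ₁) with τ ≠ 0, every u : ℝ^{N-1} → ℝ of class C^{1,β} with ‖u − λ*‖_{C^{1,β}} < λ*/2, and every v : ℝ^{N-1} → ℝ of class C^{1,β}, the function D(s) := − ∑_{q∈ℤ, q≠0} ∫_{ℝ^{N-1}} (v(s) − v(s−t)) / ( |t|² + (u(s) − u(s−t) − q/τ)² )^{(N+α)/2} dt + ∑_{q∈ℤ, q≠0} ∫_{ℝ^{N-1}} (v(s) + v(s−t)) / ( |t|² + (u(s) + u(s−t) − q/τ)² )^{(N+α)/2} dt satisfies |D(s)| ≤ c ‖v‖_{C^{1,β}} |τ|^{1+α} for all s ∈ ℝ^{N-1}, and |D(s) − D(s̄)| ≤ c ‖v‖_{C^{1,β}} |τ|^{1+α} |s − s̄|^{β−α} for all s, s̄ ∈ ℝ^{N-1}. -/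

import Mathlib

open MeasureTheory Real Filter Topology
open scoped Classical

noncomputable section

abbrev ES (m : ℕ) : Type := EuclideanSpace ℝ (Fin (m + 1))

/-- `u` is of class `C^{1,β}`. -/
def IsC1Beta {n : ℕ} (β : ℝ) (u : EuclideanSpace ℝ (Fin n) → ℝ) : Prop :=
  ContDiff ℝ 1 u ∧ (∃ C, ∀ x, |u x| ≤ C) ∧ (∃ C, ∀ x, ‖fderiv ℝ u x‖ ≤ C) ∧
    (∃ C, ∀ x y, ‖fderiv ℝ u x - fderiv ℝ u y‖ ≤ C * ‖x - y‖ ^ β)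

/-- The `β`-Hölder seminorm of the gradient of `u`. -/
def holderSemi {n : ℕ} (β : ℝ) (u : EuclideanSpace ℝ (Fin n) → ℝ) : ℝ :=
  ⨆ p : EuclideanSpace ℝ (Fin n) × EuclideanSpace ℝ (Fin n),
    if p.1 = p.2 then 0 else ‖fderiv ℝ u p.1 - fderiv ℝ u p.2‖ / ‖p.1 - p.2‖ ^ β

/-- The `C^{1,β}` norm: `sup |u| + sup |∇u| + [∇u]_β`. -/
def c1betaNorm {n : ℕ} (β : ℝ) (u : EuclideanSpace ℝ (Fin n) → ℝ) : ℝ :=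
  (⨆ x, |u x|) + (⨆ x, ‖fderiv ℝ u x‖) + holderSemi β u

/-- `D(s) = -∑_{q≠0} ∫ (v(s)-v(s-t))/(|t|²+(u(s)-u(s-t)-q/τ)²)^{(N+α)/2} dt
            + ∑_{q≠0} ∫ (v(s)+v(s-t))/(|t|²+(u(s)+u(s-t)-q/τ)²)^{(N+α)/2} dt`. -/
def Dlin (m : ℕ) (α : ℝ) (τ : ℝ) (u v : ES m → ℝ) (s : ES m) : ℝ :=
  -(∑' q : {q : ℤ // q ≠ 0},
      ∫ t : ES m, (v s - v (s - t)) /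
        (‖t‖ ^ 2 + (u s - u (s - t) - (q : ℤ) / τ) ^ 2) ^ (((m : ℝ) + 2 + α) / 2)) +
    ∑' q : {q : ℤ // q ≠ 0},
      ∫ t : ES m, (v s + v (s - t)) /
        (‖t‖ ^ 2 + (u s + u (s - t) - (q : ℤ) / τ) ^ 2) ^ (((m : ℝ) + 2 + α) / 2)

lemma contKernel {m : ℕ} (e A : ℝ) (hA : 0 < A) :
    Continuous fun t : ES m => (‖t‖ ^ 2 + A ^ 2) ^ (-e) := by
  apply Continuous.rpow_const
  · exact (continuous_norm.pow 2).add continuous_const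
  · intro t; left; positivity

lemma integrableKernel {m : ℕ} (e A : ℝ) (he : (m + 1 : ℝ) < 2 * e) (hA : 0 < A) :
    Integrable (fun t : ES m => (‖t‖ ^ 2 + A ^ 2) ^ (-e)) := by
  have hm : (0:ℝ) ≤ m := Nat.cast_nonneg m
  have he0 : 0 < e := by linarith
  have hC : (0:ℝ) < 2 * (1 + 1 / A ^ 2) := by positivity
  have hint : Integrable (fun t : ES m => (2 * (1 + 1 / A ^ 2)) ^ e * (1 + ‖t‖) ^ (-(2 * e))) := by
    apply Integrable.const_mul
    apply integrable_one_add_norm (by simpa using he)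
  refine hint.mono' ((contKernel e A hA).aestronglyMeasurable) ?_
  refine Filter.Eventually.of_forall fun t => ?_
  have h1 : (0:ℝ) < ‖t‖ ^ 2 + A ^ 2 := by positivity
  have h2 : (0:ℝ) < 1 + ‖t‖ := by positivity
  have h3 : (0:ℝ) < A ^ 2 := by positivity
  rw [Real.norm_eq_abs, abs_of_nonneg (by positivity)]
  have key : (1 + ‖t‖) ^ (2:ℕ) ≤ (2 * (1 + 1 / A ^ 2)) * (‖t‖ ^ 2 + A ^ 2) := by
    have h4 : 1 / A ^ 2 * A ^ 2 = 1 := by field_simp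
    nlinarith [sq_nonneg (‖t‖ - 1), norm_nonneg t,
      mul_nonneg (mul_nonneg (by positivity : (0:ℝ) ≤ 1 / A ^ 2) (sq_nonneg ‖t‖)) (le_of_lt hA)]
  have hexp : ((2:ℕ):ℝ) * (-e) = -(2 * e) := by push_cast; ring
  calc (‖t‖ ^ 2 + A ^ 2) ^ (-e)
      ≤ (((1 + ‖t‖) ^ (2:ℕ)) / (2 * (1 + 1 / A ^ 2))) ^ (-e) := by
        apply Real.rpow_le_rpow_of_nonpos _ _ (by linarith)
        · positivity
        · rw [div_le_iff₀ hC]; linarith [key]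
    _ = (2 * (1 + 1 / A ^ 2)) ^ e * (1 + ‖t‖) ^ (-(2 * e)) := by
        rw [Real.div_rpow (by positivity) hC.le, ← Real.rpow_natCast (1 + ‖t‖) 2,
          ← Real.rpow_mul h2.le, hexp, Real.rpow_neg hC.le, div_eq_mul_inv, inv_inv, mul_comm]

lemma intKernel_eq {m : ℕ} (e A : ℝ) (hA : 0 < A) :
    ∫ t : ES m, (‖t‖ ^ 2 + A ^ 2) ^ (-e)
      = A ^ ((m + 1 : ℝ) - 2 * e) * ∫ t : ES m, (‖t‖ ^ 2 + 1) ^ (-e) := by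
  have hA2 : ((A:ℝ) ^ 2) ^ (-e) = A ^ (-(2 * e)) := by
    rw [← Real.rpow_natCast A 2, ← Real.rpow_mul hA.le]; push_cast; ring_nf
  have hne : A ^ (-(2 * e)) ≠ 0 := (Real.rpow_pos_of_pos hA _).ne'
  have h1 : ∀ t : ES m, (‖t‖ ^ 2 + A ^ 2) ^ (-e)
      = A ^ (-(2 * e)) * ((fun y : ES m => (‖y‖ ^ 2 + 1) ^ (-e)) (A⁻¹ • t)) := by
    intro t
    have hn : ‖A⁻¹ • t‖ = A⁻¹ * ‖t‖ := by
      rw [norm_smul, Real.norm_eq_abs, abs_of_pos (by positivity)]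
    simp only [hn]
    have hb : (A⁻¹ * ‖t‖) ^ 2 + 1 = (‖t‖ ^ 2 + A ^ 2) / A ^ 2 := by
      field_simp
    rw [hb, Real.div_rpow (by positivity) (by positivity), hA2]
    field_simp
  calc ∫ t : ES m, (‖t‖ ^ 2 + A ^ 2) ^ (-e)
      = ∫ t : ES m, A ^ (-(2 * e)) * ((fun y : ES m => (‖y‖ ^ 2 + 1) ^ (-e)) (A⁻¹ • t)) :=
        integral_congr_ae (Filter.Eventually.of_forall h1)
    _ = A ^ (-(2 * e)) * ∫ t : ES m, (fun y : ES m => (‖y‖ ^ 2 + 1) ^ (-e)) (A⁻¹ • t) :=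
        integral_const_mul _ _
    _ = A ^ (-(2 * e)) * (|A ^ Module.finrank ℝ (ES m)| • ∫ y : ES m, (‖y‖ ^ 2 + 1) ^ (-e)) := by
        rw [Measure.integral_comp_inv_smul volume (fun y : ES m => (‖y‖ ^ 2 + 1) ^ (-e)) A]
    _ = A ^ ((m + 1 : ℝ) - 2 * e) * ∫ t : ES m, (‖t‖ ^ 2 + 1) ^ (-e) := by
        have hfr : Module.finrank ℝ (ES m) = m + 1 := by simp
        rw [hfr, smul_eq_mul, abs_of_pos (by positivity), ← mul_assoc,
          ← Real.rpow_natCast A (m + 1), ← Real.rpow_add hA]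
        congr 1
        push_cast; ring

/-- pointwise bound : `|x / (c + w²)^p| ≤ M (c + A²)^(-p)` -/
lemma ptBound {p c A M x w : ℝ} (hc : 0 ≤ c) (hp : 0 < p) (hA : 0 < A)
    (hx : |x| ≤ M) (hw : A ≤ |w|) :
    |x / (c + w ^ 2) ^ p| ≤ M * (c + A ^ 2) ^ (-p) := by
  have hw2 : A ^ 2 ≤ w ^ 2 := by
    rw [← sq_abs w]; exact pow_le_pow_left₀ hA.le hw 2
  have h1 : (0:ℝ) < c + A ^ 2 := by positivity
  have h2 : (0:ℝ) < c + w ^ 2 := by linarith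
  have h3 : (c + A ^ 2) ^ p ≤ (c + w ^ 2) ^ p :=
    Real.rpow_le_rpow h1.le (by linarith) hp.le
  have h4 : (0:ℝ) < (c + A ^ 2) ^ p := Real.rpow_pos_of_pos h1 p
  rw [abs_div, abs_of_pos (Real.rpow_pos_of_pos h2 p), Real.rpow_neg h1.le,
    ← div_eq_mul_inv]
  exact div_le_div₀ (le_trans (abs_nonneg x) hx) hx (by positivity) (by linarith)

/-- MVT bound for the kernel -/
lemma denDiff (p c A : ℝ) (hc : 0 ≤ c) (hp : 0 < p) (hA : 0 < A) {x y : ℝ}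
    (hz : ∀ z ∈ Set.uIcc x y, A ≤ |z|) :
    |(c + x ^ 2) ^ (-p) - (c + y ^ 2) ^ (-p)|
      ≤ 2 * p * (c + A ^ 2) ^ (-(p + 1 / 2)) * |x - y| := by
  have hCA : (0:ℝ) < c + A ^ 2 := by positivity
  set C := 2 * p * (c + A ^ 2) ^ (-(p + 1 / 2)) with hC
  have sqle : ∀ z ∈ Set.uIcc x y, (0:ℝ) < c + z ^ 2 ∧ A ^ 2 ≤ z ^ 2 := by
    intro z hzs
    have hz2 : A ^ 2 ≤ z ^ 2 := by
      rw [← sq_abs z]; exact pow_le_pow_left₀ hA.le (hz z hzs) 2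
    have : (0:ℝ) < A ^ 2 := by positivity
    exact ⟨by nlinarith, hz2⟩
  have key : ∀ z ∈ Set.uIcc x y,
      HasDerivWithinAt (fun z : ℝ => (c + z ^ 2) ^ (-p))
        (((2:ℕ) * z ^ (2 - 1)) * (-p) * (c + z ^ 2) ^ (-p - 1)) (Set.uIcc x y) z := by
    intro z hzs
    have hne : c + z ^ 2 ≠ 0 := (sqle z hzs).1.ne'
    have h := ((hasDerivAt_pow 2 z).const_add c).rpow_const (p := -p) (Or.inl hne)
    exact h.hasDerivWithinAt
  have bound : ∀ z ∈ Set.uIcc x y,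
      ‖((2:ℕ) * z ^ (2 - 1)) * (-p) * (c + z ^ 2) ^ (-p - 1)‖ ≤ C := by
    intro z hzs
    obtain ⟨h2, hz2⟩ := sqle z hzs
    have habs : |z| ≤ (c + z ^ 2) ^ (1 / 2 : ℝ) := by
      rw [← Real.sqrt_eq_rpow, ← Real.sqrt_sq_eq_abs]
      exact Real.sqrt_le_sqrt (by linarith)
    have hpos : (0:ℝ) < (c + z ^ 2) ^ (-p - 1) := Real.rpow_pos_of_pos h2 _
    have hmul : (c + z ^ 2) ^ (1 / 2 : ℝ) * (c + z ^ 2) ^ (-p - 1)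
        = (c + z ^ 2) ^ (-(p + 1 / 2)) := by
      rw [← Real.rpow_add h2]; congr 1; ring
    rw [Real.norm_eq_abs, abs_mul, abs_mul, abs_neg, abs_of_pos hp, abs_of_pos hpos,
      abs_mul]
    norm_num
    calc 2 * |z| * p * (c + z ^ 2) ^ (-p - 1)
        ≤ 2 * (c + z ^ 2) ^ (1 / 2 : ℝ) * p * (c + z ^ 2) ^ (-p - 1) := by
          have := mul_le_mul_of_nonneg_left habs (by norm_num : (0:ℝ) ≤ 2)
          apply mul_le_mul_of_nonneg_right _ hpos.le
          exact mul_le_mul_of_nonneg_right this hp.le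
      _ = 2 * p * ((c + z ^ 2) ^ (1 / 2 : ℝ) * (c + z ^ 2) ^ (-p - 1)) := by ring
      _ = 2 * p * (c + z ^ 2) ^ (-(p + 1 / 2)) := by rw [hmul]
      _ ≤ C := by
          rw [hC]
          apply mul_le_mul_of_nonneg_left _ (by positivity)
          exact Real.rpow_le_rpow_of_nonpos hCA (by linarith) (by linarith)
  have := (convex_uIcc x y).norm_image_sub_le_of_norm_hasDerivWithin_le key bound
    (Set.left_mem_uIcc) (Set.right_mem_uIcc)
  rw [Real.norm_eq_abs, Real.norm_eq_abs] at this
  calc |(c + x ^ 2) ^ (-p) - (c + y ^ 2) ^ (-p)|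
      = |(c + y ^ 2) ^ (-p) - (c + x ^ 2) ^ (-p)| := abs_sub_comm _ _
    _ ≤ C * |y - x| := this
    _ = C * |x - y| := by rw [abs_sub_comm]

lemma mem_uIcc_abs {x y Q r : ℝ} (hx : |x + Q| ≤ r) (hy : |y + Q| ≤ r) {z : ℝ}
    (hz : z ∈ Set.uIcc x y) : |z + Q| ≤ r := by
  rw [Set.mem_uIcc] at hz
  rw [abs_le] at hx hy ⊢
  rcases hz with ⟨h1, h2⟩ | ⟨h1, h2⟩ <;> constructor <;> linarith [hx.1, hx.2, hy.1, hy.2]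

lemma holderSemi_nonneg {n : ℕ} (β : ℝ) (u : EuclideanSpace ℝ (Fin n) → ℝ) :
    0 ≤ holderSemi β u := by
  apply Real.iSup_nonneg
  intro p
  split
  · exact le_refl 0
  · positivity

lemma c1betaNorm_nonneg {n : ℕ} (β : ℝ) (u : EuclideanSpace ℝ (Fin n) → ℝ) :
    0 ≤ c1betaNorm β u := by
  have h1 : (0:ℝ) ≤ ⨆ x, |u x| := Real.iSup_nonneg fun x => abs_nonneg _
  have h2 : (0:ℝ) ≤ ⨆ x, ‖fderiv ℝ u x‖ := Real.iSup_nonneg fun x => norm_nonneg _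
  have h3 := holderSemi_nonneg β u
  unfold c1betaNorm; linarith

lemma abs_le_c1betaNorm {n : ℕ} {β : ℝ} {u : EuclideanSpace ℝ (Fin n) → ℝ}
    (h : IsC1Beta β u) (x : EuclideanSpace ℝ (Fin n)) : |u x| ≤ c1betaNorm β u := by
  obtain ⟨-, ⟨C0, h0⟩, -, -⟩ := h
  have hb : BddAbove (Set.range fun x => |u x|) := ⟨C0, by rintro y ⟨x, rfl⟩; exact h0 x⟩
  have h1 : |u x| ≤ ⨆ x, |u x| := le_ciSup hb x
  have h2 : (0:ℝ) ≤ ⨆ x, ‖fderiv ℝ u x‖ := Real.iSup_nonneg fun x => norm_nonneg _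
  have h3 := holderSemi_nonneg β u
  unfold c1betaNorm; linarith

lemma lip_le_c1betaNorm {n : ℕ} {β : ℝ} {u : EuclideanSpace ℝ (Fin n) → ℝ}
    (h : IsC1Beta β u) (x y : EuclideanSpace ℝ (Fin n)) :
    |u x - u y| ≤ c1betaNorm β u * ‖x - y‖ := by
  obtain ⟨hcd, -, ⟨C1, h1⟩, -⟩ := h
  have hb : BddAbove (Set.range fun x => ‖fderiv ℝ u x‖) :=
    ⟨C1, by rintro y ⟨x, rfl⟩; exact h1 x⟩
  have key : |u x - u y| ≤ (⨆ x, ‖fderiv ℝ u x‖) * ‖x - y‖ := by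
    have := (convex_univ (𝕜 := ℝ) (E := EuclideanSpace ℝ (Fin n))).norm_image_sub_le_of_norm_fderiv_le
      (f := u) (C := ⨆ x, ‖fderiv ℝ u x‖)
      (fun z _ => (hcd.differentiable one_ne_zero).differentiableAt)
      (fun z _ => le_ciSup hb z) (Set.mem_univ y) (Set.mem_univ x)
    simpa [Real.norm_eq_abs] using this
  refine key.trans (mul_le_mul_of_nonneg_right ?_ (norm_nonneg _))
  have h1' : (0:ℝ) ≤ ⨆ x, |u x| := Real.iSup_nonneg fun x => abs_nonneg _
  have h3 := holderSemi_nonneg β u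
  unfold c1betaNorm; linarith

lemma isC1Beta_sub_const {n : ℕ} {β : ℝ} {u : EuclideanSpace ℝ (Fin n) → ℝ}
    (h : IsC1Beta β u) (a : ℝ) : IsC1Beta β (fun x => u x - a) := by
  obtain ⟨hcd, ⟨C0, h0⟩, ⟨C1, h1⟩, ⟨C2, h2⟩⟩ := h
  have hfd : ∀ x, fderiv ℝ (fun x => u x - a) x = fderiv ℝ u x := fun x => by
    rw [fderiv_sub_const]
  exact ⟨hcd.sub contDiff_const,
    ⟨C0 + |a|, fun x => (abs_sub (u x) a).trans (by linarith [h0 x])⟩,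
    ⟨C1, fun x => by rw [hfd]; exact h1 x⟩,
    ⟨C2, fun x y => by rw [hfd, hfd]; exact h2 x y⟩⟩

lemma contIntegrand {m : ℕ} (p A : ℝ) (hA : 0 < A) (f g : ES m → ℝ) (hf : Continuous f)
    (hg : Continuous g) (hgA : ∀ t, A ≤ |g t|) :
    Continuous fun t : ES m => f t / (‖t‖ ^ 2 + g t ^ 2) ^ p := by
  have hd : ∀ t : ES m, (0:ℝ) < ‖t‖ ^ 2 + g t ^ 2 := by
    intro t
    nlinarith [mul_self_le_mul_self hA.le (hgA t), sq_nonneg ‖t‖, sq_abs (g t)]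
  apply hf.div
  · apply Continuous.rpow_const ((continuous_norm.pow 2).add (hg.pow 2))
    intro t; exact Or.inl (hd t).ne'
  · intro t
    exact (Real.rpow_pos_of_pos (hd t) p).ne'

lemma intBound {m : ℕ} {p A M : ℝ} (hp1 : (m + 1 : ℝ) < 2 * p) (hA : 0 < A)
    (f g : ES m → ℝ) (hf : Continuous f) (hg : Continuous g)
    (hfM : ∀ t, |f t| ≤ M) (hgA : ∀ t, A ≤ |g t|) :
    Integrable (fun t : ES m => f t / (‖t‖ ^ 2 + g t ^ 2) ^ p) ∧
      |∫ t : ES m, f t / (‖t‖ ^ 2 + g t ^ 2) ^ p|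
        ≤ M * A ^ ((m + 1 : ℝ) - 2 * p) * ∫ t : ES m, (‖t‖ ^ 2 + 1) ^ (-p) := by
  have hm : (0:ℝ) ≤ m := Nat.cast_nonneg m
  have hp : 0 < p := by linarith
  have hM : 0 ≤ M := le_trans (abs_nonneg _) (hfM 0)
  have hpt : ∀ t : ES m, |f t / (‖t‖ ^ 2 + g t ^ 2) ^ p| ≤ M * (‖t‖ ^ 2 + A ^ 2) ^ (-p) :=
    fun t => ptBound (by positivity) hp hA (hfM t) (hgA t)
  have hmaj : Integrable (fun t : ES m => M * (‖t‖ ^ 2 + A ^ 2) ^ (-p)) :=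
    (integrableKernel p A hp1 hA).const_mul M
  have hint : Integrable (fun t : ES m => f t / (‖t‖ ^ 2 + g t ^ 2) ^ p) := by
    refine hmaj.mono' ((contIntegrand p A hA f g hf hg hgA).aestronglyMeasurable) ?_
    exact Filter.Eventually.of_forall fun t => by rw [Real.norm_eq_abs]; exact hpt t
  refine ⟨hint, ?_⟩
  calc |∫ t : ES m, f t / (‖t‖ ^ 2 + g t ^ 2) ^ p|
      ≤ ∫ t : ES m, M * (‖t‖ ^ 2 + A ^ 2) ^ (-p) := by
        rw [← Real.norm_eq_abs]
        exact norm_integral_le_of_norm_le hmaj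
          (Filter.Eventually.of_forall fun t => by rw [Real.norm_eq_abs]; exact hpt t)
    _ = M * ∫ t : ES m, (‖t‖ ^ 2 + A ^ 2) ^ (-p) := integral_const_mul _ _
    _ = M * A ^ ((m + 1 : ℝ) - 2 * p) * ∫ t : ES m, (‖t‖ ^ 2 + 1) ^ (-p) := by
        rw [intKernel_eq p A hA, mul_assoc]

lemma intDiffBound {m : ℕ} {p A L M D : ℝ} (hp1 : (m + 1 : ℝ) < 2 * p) (hA : 0 < A)
    (hL : 0 ≤ L) (hM : 0 ≤ M) (hD : 0 ≤ D)
    (f₁ f₂ g₁ g₂ : ES m → ℝ) (hf₁ : Continuous f₁) (hf₂ : Continuous f₂)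
    (hg₁ : Continuous g₁) (hg₂ : Continuous g₂)
    (hdiff : ∀ t, |f₁ t - f₂ t| ≤ L) (hfM₁ : ∀ t, |f₁ t| ≤ M) (hfM₂ : ∀ t, |f₂ t| ≤ M)
    (hseg : ∀ t, ∀ z ∈ Set.uIcc (g₁ t) (g₂ t), A ≤ |z|)
    (hgdist : ∀ t, |g₁ t - g₂ t| ≤ D) :
    |(∫ t : ES m, f₁ t / (‖t‖ ^ 2 + g₁ t ^ 2) ^ p) -
        ∫ t : ES m, f₂ t / (‖t‖ ^ 2 + g₂ t ^ 2) ^ p|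
      ≤ L * A ^ ((m + 1 : ℝ) - 2 * p) * (∫ t : ES m, (‖t‖ ^ 2 + 1) ^ (-p))
        + M * (2 * p * D) * A ^ ((m + 1 : ℝ) - 2 * (p + 1 / 2)) *
            ∫ t : ES m, (‖t‖ ^ 2 + 1) ^ (-(p + 1 / 2)) := by
  have hm : (0:ℝ) ≤ m := Nat.cast_nonneg m
  have hp : 0 < p := by linarith
  have hp2 : (m + 1 : ℝ) < 2 * (p + 1 / 2) := by linarith
  have hgA₁ : ∀ t, A ≤ |g₁ t| := fun t => hseg t _ Set.left_mem_uIcc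
  have hgA₂ : ∀ t, A ≤ |g₂ t| := fun t => hseg t _ Set.right_mem_uIcc
  have hint₁ := (intBound hp1 hA f₁ g₁ hf₁ hg₁ hfM₁ hgA₁).1
  have hint₂ := (intBound hp1 hA f₂ g₂ hf₂ hg₂ hfM₂ hgA₂).1
  have hmaj : Integrable (fun t : ES m =>
      L * (‖t‖ ^ 2 + A ^ 2) ^ (-p) + M * (2 * p * D) * (‖t‖ ^ 2 + A ^ 2) ^ (-(p + 1 / 2))) :=
    ((integrableKernel p A hp1 hA).const_mul L).add
      ((integrableKernel (p + 1 / 2) A hp2 hA).const_mul _)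
  have hpt : ∀ t : ES m,
      ‖f₁ t / (‖t‖ ^ 2 + g₁ t ^ 2) ^ p - f₂ t / (‖t‖ ^ 2 + g₂ t ^ 2) ^ p‖
        ≤ L * (‖t‖ ^ 2 + A ^ 2) ^ (-p) + M * (2 * p * D) * (‖t‖ ^ 2 + A ^ 2) ^ (-(p + 1 / 2)) := by
    intro t
    have hc : (0:ℝ) ≤ ‖t‖ ^ 2 := by positivity
    have hd₁ : (0:ℝ) < ‖t‖ ^ 2 + g₁ t ^ 2 := by
      have := hgA₁ t; nlinarith [abs_nonneg (g₁ t), sq_abs (g₁ t)]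
    have hd₂ : (0:ℝ) < ‖t‖ ^ 2 + g₂ t ^ 2 := by
      have := hgA₂ t; nlinarith [abs_nonneg (g₂ t), sq_abs (g₂ t)]
    have e₁ : f₁ t / (‖t‖ ^ 2 + g₁ t ^ 2) ^ p = f₁ t * (‖t‖ ^ 2 + g₁ t ^ 2) ^ (-p) := by
      rw [Real.rpow_neg hd₁.le, div_eq_mul_inv]
    have e₂ : f₂ t / (‖t‖ ^ 2 + g₂ t ^ 2) ^ p = f₂ t * (‖t‖ ^ 2 + g₂ t ^ 2) ^ (-p) := by
      rw [Real.rpow_neg hd₂.le, div_eq_mul_inv]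
    rw [Real.norm_eq_abs, e₁, e₂]
    have split : f₁ t * (‖t‖ ^ 2 + g₁ t ^ 2) ^ (-p) - f₂ t * (‖t‖ ^ 2 + g₂ t ^ 2) ^ (-p)
        = (f₁ t - f₂ t) * (‖t‖ ^ 2 + g₁ t ^ 2) ^ (-p)
          + f₂ t * ((‖t‖ ^ 2 + g₁ t ^ 2) ^ (-p) - (‖t‖ ^ 2 + g₂ t ^ 2) ^ (-p)) := by ring
    rw [split]
    have h1 : |(f₁ t - f₂ t) * (‖t‖ ^ 2 + g₁ t ^ 2) ^ (-p)| ≤ L * (‖t‖ ^ 2 + A ^ 2) ^ (-p) := by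
      rw [abs_mul]
      apply mul_le_mul (hdiff t) _ (abs_nonneg _) hL
      rw [abs_of_pos (Real.rpow_pos_of_pos hd₁ _)]
      apply Real.rpow_le_rpow_of_nonpos (by positivity) _ (by linarith)
      have h := hgA₁ t
      nlinarith [sq_abs (g₁ t)]
    have h2 : |f₂ t * ((‖t‖ ^ 2 + g₁ t ^ 2) ^ (-p) - (‖t‖ ^ 2 + g₂ t ^ 2) ^ (-p))|
        ≤ M * (2 * p * D) * (‖t‖ ^ 2 + A ^ 2) ^ (-(p + 1 / 2)) := by
      rw [abs_mul]
      have hmvt := denDiff p (‖t‖ ^ 2) A hc hp hA (hseg t)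
      calc |f₂ t| * |(‖t‖ ^ 2 + g₁ t ^ 2) ^ (-p) - (‖t‖ ^ 2 + g₂ t ^ 2) ^ (-p)|
          ≤ M * (2 * p * (‖t‖ ^ 2 + A ^ 2) ^ (-(p + 1 / 2)) * |g₁ t - g₂ t|) :=
            mul_le_mul (hfM₂ t) hmvt (abs_nonneg _) hM
        _ ≤ M * (2 * p * (‖t‖ ^ 2 + A ^ 2) ^ (-(p + 1 / 2)) * D) := by
            apply mul_le_mul_of_nonneg_left _ hM
            apply mul_le_mul_of_nonneg_left (hgdist t) (by positivity)
        _ = M * (2 * p * D) * (‖t‖ ^ 2 + A ^ 2) ^ (-(p + 1 / 2)) := by ring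
    calc |(f₁ t - f₂ t) * (‖t‖ ^ 2 + g₁ t ^ 2) ^ (-p)
          + f₂ t * ((‖t‖ ^ 2 + g₁ t ^ 2) ^ (-p) - (‖t‖ ^ 2 + g₂ t ^ 2) ^ (-p))|
        ≤ |(f₁ t - f₂ t) * (‖t‖ ^ 2 + g₁ t ^ 2) ^ (-p)|
          + |f₂ t * ((‖t‖ ^ 2 + g₁ t ^ 2) ^ (-p) - (‖t‖ ^ 2 + g₂ t ^ 2) ^ (-p))| := abs_add_le _ _
      _ ≤ _ := add_le_add h1 h2
  calc |(∫ t : ES m, f₁ t / (‖t‖ ^ 2 + g₁ t ^ 2) ^ p) -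
        ∫ t : ES m, f₂ t / (‖t‖ ^ 2 + g₂ t ^ 2) ^ p|
      = ‖∫ t : ES m, (f₁ t / (‖t‖ ^ 2 + g₁ t ^ 2) ^ p - f₂ t / (‖t‖ ^ 2 + g₂ t ^ 2) ^ p)‖ := by
        rw [integral_sub hint₁ hint₂, Real.norm_eq_abs]
    _ ≤ ∫ t : ES m, (L * (‖t‖ ^ 2 + A ^ 2) ^ (-p)
          + M * (2 * p * D) * (‖t‖ ^ 2 + A ^ 2) ^ (-(p + 1 / 2))) :=
        norm_integral_le_of_norm_le hmaj (Filter.Eventually.of_forall hpt)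
    _ = L * (∫ t : ES m, (‖t‖ ^ 2 + A ^ 2) ^ (-p))
          + M * (2 * p * D) * ∫ t : ES m, (‖t‖ ^ 2 + A ^ 2) ^ (-(p + 1 / 2)) := by
        rw [integral_add ((integrableKernel p A hp1 hA).const_mul L)
          ((integrableKernel (p + 1 / 2) A hp2 hA).const_mul _),
          integral_const_mul, integral_const_mul]
    _ = _ := by
        rw [intKernel_eq p A hA, intKernel_eq (p + 1 / 2) A hA]; ring

set_option maxHeartbeats 1600000 in
/-- uniform bounds for the linearization `D` of `𝓗` at `u` in direction `v`:
`|D(s)| ≤ c ‖v‖_{C^{1,β}} |τ|^{1+α}` and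
`|D(s) - D(s̄)| ≤ c ‖v‖_{C^{1,β}} |τ|^{1+α} |s-s̄|^{β-α}`, with `c` depending only on
`N, α, β, λ*`.  Here `N = m + 2 ≥ 2` and `τ₁ = 1/(6λ*)`. -/
theorem statement_16 (m : ℕ) (α β lamStar : ℝ) (hα : α ∈ Set.Ioo (0 : ℝ) 1)
    (hβ : β ∈ Set.Ioo α 1) (hl : 0 < lamStar) :
    ∃ c > 0, ∀ τ : ℝ, τ ≠ 0 → |τ| < 1 / (6 * lamStar) →
      ∀ u v : ES m → ℝ, IsC1Beta β u →
        c1betaNorm β (fun x => u x - lamStar) < lamStar / 2 → IsC1Beta β v →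
        (∀ s : ES m, |Dlin m α τ u v s| ≤ c * c1betaNorm β v * |τ| ^ (1 + α)) ∧
        ∀ s sbar : ES m,
          |Dlin m α τ u v s - Dlin m α τ u v sbar|
            ≤ c * c1betaNorm β v * |τ| ^ (1 + α) * ‖s - sbar‖ ^ (β - α) := by
  obtain ⟨hα0, hα1⟩ := hα
  obtain ⟨hβα, hβ1⟩ := hβ
  have hm : (0:ℝ) ≤ m := Nat.cast_nonneg m
  obtain ⟨p, hp_def⟩ : ∃ p : ℝ, p = ((m : ℝ) + 2 + α) / 2 := ⟨_, rfl⟩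
  have hp1 : (m + 1 : ℝ) < 2 * p := by rw [hp_def]; ring_nf; linarith
  have hp : 0 < p := by rw [hp_def]; positivity
  have hexp1 : (m + 1 : ℝ) - 2 * p = -(1 + α) := by rw [hp_def]; ring
  have hexp2 : (m + 1 : ℝ) - 2 * (p + 1 / 2) = -(2 + α) := by rw [hp_def]; ring
  set J1 : ℝ := ∫ t : ES m, (‖t‖ ^ 2 + 1) ^ (-p) with hJ1
  set J2 : ℝ := ∫ t : ES m, (‖t‖ ^ 2 + 1) ^ (-(p + 1 / 2)) with hJ2
  have hJ1n : 0 ≤ J1 := integral_nonneg fun t => Real.rpow_nonneg (by positivity) _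
  have hJ2n : 0 ≤ J2 := integral_nonneg fun t => Real.rpow_nonneg (by positivity) _
  have hsum : Summable (fun q : {q : ℤ // q ≠ 0} => |((q : ℤ) : ℝ)| ^ (-(1 + α))) :=
    (Real.summable_abs_int_rpow (by linarith)).subtype _
  set S : ℝ := ∑' q : {q : ℤ // q ≠ 0}, |((q : ℤ) : ℝ)| ^ (-(1 + α)) with hS
  have hSn : 0 ≤ S := tsum_nonneg fun q => Real.rpow_nonneg (abs_nonneg _) _
  set csup : ℝ := 16 * J1 * S with hcsup_def
  set CH : ℝ := 4 * (2 * J1 + 2 * p * J2) with hCH_def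
  have hcsupn : 0 ≤ csup := by
    rw [hcsup_def]; apply mul_nonneg (by linarith) hSn
  have hCHn : 0 ≤ CH := by
    rw [hCH_def]; nlinarith
  have hCHSn : 0 ≤ CH * S := mul_nonneg hCHn hSn
  refine ⟨1 + 2 * csup + 2 * CH * S, by linarith, ?_⟩
  intro τ hτ hτ1 u v hu hunorm hv
  have hT : 0 < |τ| := abs_pos.mpr hτ
  set T := |τ| with hTdef
  have hT6 : 6 * lamStar * T < 1 := by
    have := (lt_div_iff₀ (by positivity : (0:ℝ) < 6 * lamStar)).mp hτ1
    linarith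
  set Mv := c1betaNorm β v with hMv
  have hMvn : 0 ≤ Mv := c1betaNorm_nonneg β v
  have hTα : 0 ≤ T ^ (1 + α) := Real.rpow_nonneg hT.le _
  have hMT : 0 ≤ Mv * T ^ (1 + α) := mul_nonneg hMvn hTα
  -- bounds on u and v
  have hwC1 : IsC1Beta β (fun x => u x - lamStar) := isC1Beta_sub_const hu lamStar
  have hub : ∀ x, |u x| ≤ 3 * lamStar / 2 := by
    intro x
    have h1 : |u x - lamStar| ≤ lamStar / 2 :=
      (abs_le_c1betaNorm hwC1 x).trans hunorm.le
    rw [abs_le] at h1 ⊢; constructor <;> linarith [h1.1, h1.2]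
  have hulip : ∀ x y, |u x - u y| ≤ lamStar / 2 * ‖x - y‖ := by
    intro x y
    have h1 := lip_le_c1betaNorm hwC1 x y
    simp only [sub_sub_sub_cancel_right] at h1
    refine h1.trans (mul_le_mul_of_nonneg_right hunorm.le (norm_nonneg _))
  have hvb : ∀ x, |v x| ≤ Mv := abs_le_c1betaNorm hv
  have hvlip : ∀ x y, |v x - v y| ≤ Mv * ‖x - y‖ := lip_le_c1betaNorm hv
  have hvcont : Continuous v := hv.1.continuous
  have hucont : Continuous u := hu.1.continuous
  -- per-q quantities
  set A : {q : ℤ // q ≠ 0} → ℝ := fun q => |((q : ℤ) : ℝ)| / (2 * T) with hAdef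
  have hq1 : ∀ q : {q : ℤ // q ≠ 0}, (1:ℝ) ≤ |((q : ℤ) : ℝ)| := by
    intro q
    rw [← Int.cast_abs]
    exact_mod_cast Int.one_le_abs (by exact_mod_cast q.2)
  have hA : ∀ q : {q : ℤ // q ≠ 0}, 0 < A q := by
    intro q
    apply div_pos (lt_of_lt_of_le one_pos (hq1 q)) (by positivity)
  have hA3 : ∀ q : {q : ℤ // q ≠ 0}, 3 * lamStar ≤ A q := by
    intro q
    rw [hAdef]
    rw [le_div_iff₀ (by positivity : (0:ℝ) < 2 * T)]
    nlinarith [hq1 q]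
  have h2A : ∀ q : {q : ℤ // q ≠ 0}, |((q : ℤ) : ℝ)| / T = 2 * A q := by
    intro q; rw [hAdef]; field_simp
  have hsep : ∀ (q : {q : ℤ // q ≠ 0}) (a : ℝ), |a| ≤ 3 * lamStar →
      A q ≤ |a - ((q : ℤ) : ℝ) / τ| := by
    intro q a ha
    have hQ : |((q : ℤ) : ℝ) / τ| = |((q : ℤ) : ℝ)| / T := by rw [abs_div]
    have h1 : |((q : ℤ) : ℝ) / τ| - |a| ≤ |a - ((q : ℤ) : ℝ) / τ| := by
      rw [abs_sub_comm]
      exact le_trans (sub_le_sub_right (le_refl _) _) (abs_sub_abs_le_abs_sub _ _)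
    rw [hQ, h2A q] at h1
    linarith [hA3 q]
  -- kernel exponent estimates
  have hX : ∀ q : {q : ℤ // q ≠ 0}, (0:ℝ) ≤ |((q : ℤ) : ℝ)| ^ (-(1 + α)) :=
    fun q => Real.rpow_nonneg (abs_nonneg _) _
  have h24 : (2:ℝ) ^ (1 + α) ≤ 4 := by
    calc (2:ℝ) ^ (1 + α) ≤ 2 ^ (2:ℝ) :=
          Real.rpow_le_rpow_of_exponent_le one_le_two (by linarith)
      _ = 4 := by
          rw [show (2:ℝ) = ((2:ℕ):ℝ) by norm_num, Real.rpow_natCast]; norm_num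
  have hAle : ∀ q : {q : ℤ // q ≠ 0}, (A q) ^ (-(1 + α)) ≤ 4 * T ^ (1 + α) * |((q : ℤ) : ℝ)| ^ (-(1 + α)) := by
    intro q
    have hq0 : (0:ℝ) < |((q : ℤ) : ℝ)| := lt_of_lt_of_le one_pos (hq1 q)
    have hAr : (A q) ^ (-(1 + α)) = (2 * T) ^ (1 + α) * |((q : ℤ) : ℝ)| ^ (-(1 + α)) := by
      rw [hAdef]
      rw [Real.rpow_neg (by positivity), Real.div_rpow (abs_nonneg _) (by positivity),
        inv_div, div_eq_mul_inv, Real.rpow_neg (abs_nonneg _)]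
    rw [hAr]
    apply mul_le_mul_of_nonneg_right _ (hX q)
    calc (2 * T) ^ (1 + α) = 2 ^ (1 + α) * T ^ (1 + α) :=
          Real.mul_rpow (by norm_num) hT.le
      _ ≤ 4 * T ^ (1 + α) := mul_le_mul_of_nonneg_right h24 hTα
  have hA2le : ∀ q : {q : ℤ // q ≠ 0}, (A q) ^ (-(2 + α))
      ≤ 1 / (3 * lamStar) * (4 * T ^ (1 + α) * |((q : ℤ) : ℝ)| ^ (-(1 + α))) := by
    intro q
    have h1 : (A q) ^ (-(2 + α)) = (A q) ^ (-(1 + α)) * (A q) ^ (-(1:ℝ)) := by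
      rw [← Real.rpow_add (hA q)]; congr 1; ring
    have h2 : (A q) ^ (-(1:ℝ)) ≤ 1 / (3 * lamStar) := by
      rw [Real.rpow_neg_one, one_div]
      exact inv_anti₀ (by positivity) (hA3 q)
    rw [h1, mul_comm]
    apply mul_le_mul h2 (hAle q) (Real.rpow_nonneg (hA q).le _) (by positivity)
  -- core per-q bound
  have core : ∀ (f g : ES m → ℝ), Continuous f → Continuous g →
      (∀ t, |f t| ≤ 2 * Mv) → (∀ t, |g t| ≤ 3 * lamStar) →
      ∀ q : {q : ℤ // q ≠ 0},
        Integrable (fun t : ES m => f t / (‖t‖ ^ 2 + (g t - ((q : ℤ) : ℝ) / τ) ^ 2) ^ p) ∧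
        |∫ t : ES m, f t / (‖t‖ ^ 2 + (g t - ((q : ℤ) : ℝ) / τ) ^ 2) ^ p|
          ≤ 8 * J1 * Mv * T ^ (1 + α) * |((q : ℤ) : ℝ)| ^ (-(1 + α)) := by
    intro f g hf hg hfM hgb q
    have hgA : ∀ t, A q ≤ |g t - ((q : ℤ) : ℝ) / τ| := fun t => hsep q (g t) (hgb t)
    obtain ⟨hint, hbd⟩ := intBound (M := 2 * Mv) hp1 (hA q) f
      (fun t => g t - ((q : ℤ) : ℝ) / τ) hf (hg.sub continuous_const) hfM hgA
    refine ⟨hint, hbd.trans ?_⟩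
    rw [hexp1, ← hJ1]
    calc 2 * Mv * (A q) ^ (-(1 + α)) * J1
        ≤ 2 * Mv * (4 * T ^ (1 + α) * |((q : ℤ) : ℝ)| ^ (-(1 + α))) * J1 := by
          apply mul_le_mul_of_nonneg_right _ hJ1n
          exact mul_le_mul_of_nonneg_left (hAle q) (by linarith)
      _ = 8 * J1 * Mv * T ^ (1 + α) * |((q : ℤ) : ℝ)| ^ (-(1 + α)) := by ring
  -- core per-q difference bound
  have core2 : ∀ (δ' : ℝ), 0 ≤ δ' → ∀ (f₁ f₂ g₁ g₂ : ES m → ℝ),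
      Continuous f₁ → Continuous f₂ → Continuous g₁ → Continuous g₂ →
      (∀ t, |f₁ t| ≤ 2 * Mv) → (∀ t, |f₂ t| ≤ 2 * Mv) →
      (∀ t, |f₁ t - f₂ t| ≤ 2 * Mv * δ') →
      (∀ t, |g₁ t| ≤ 3 * lamStar) → (∀ t, |g₂ t| ≤ 3 * lamStar) →
      (∀ t, |g₁ t - g₂ t| ≤ lamStar * δ') →
      ∀ q : {q : ℤ // q ≠ 0},
        |(∫ t : ES m, f₁ t / (‖t‖ ^ 2 + (g₁ t - ((q : ℤ) : ℝ) / τ) ^ 2) ^ p) -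
            ∫ t : ES m, f₂ t / (‖t‖ ^ 2 + (g₂ t - ((q : ℤ) : ℝ) / τ) ^ 2) ^ p|
          ≤ CH * Mv * δ' * T ^ (1 + α) * |((q : ℤ) : ℝ)| ^ (-(1 + α)) := by
    intro δ' hδ' f₁ f₂ g₁ g₂ hf₁ hf₂ hg₁ hg₂ hM₁ hM₂ hdiff hb₁ hb₂ hgdist q
    have hseg : ∀ t : ES m, ∀ z ∈ Set.uIcc (g₁ t - ((q : ℤ) : ℝ) / τ)
        (g₂ t - ((q : ℤ) : ℝ) / τ), A q ≤ |z| := by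
      intro t z hz
      have h1 : |g₁ t - ((q : ℤ) : ℝ) / τ + ((q : ℤ) : ℝ) / τ| ≤ 3 * lamStar := by
        rw [sub_add_cancel]; exact hb₁ t
      have h2 : |g₂ t - ((q : ℤ) : ℝ) / τ + ((q : ℤ) : ℝ) / τ| ≤ 3 * lamStar := by
        rw [sub_add_cancel]; exact hb₂ t
      have h3 := mem_uIcc_abs h1 h2 hz
      have h4 := hsep q (z + ((q : ℤ) : ℝ) / τ) h3
      rw [add_sub_cancel_right] at h4
      exact h4
    have hgd : ∀ t : ES m, |(g₁ t - ((q : ℤ) : ℝ) / τ) - (g₂ t - ((q : ℤ) : ℝ) / τ)|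
        ≤ lamStar * δ' := by
      intro t
      rw [sub_sub_sub_cancel_right]
      exact hgdist t
    have key := intDiffBound (L := 2 * Mv * δ') (M := 2 * Mv) (D := lamStar * δ')
      hp1 (hA q) (by positivity) (by positivity) (by positivity)
      f₁ f₂ (fun t => g₁ t - ((q : ℤ) : ℝ) / τ) (fun t => g₂ t - ((q : ℤ) : ℝ) / τ)
      hf₁ hf₂ (hg₁.sub continuous_const) (hg₂.sub continuous_const)
      hdiff hM₁ hM₂ hseg hgd
    refine key.trans ?_
    rw [hexp1, hexp2, ← hJ1, ← hJ2]
    set X := |((q : ℤ) : ℝ)| ^ (-(1 + α)) with hXdef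
    set Y := 4 * T ^ (1 + α) * X with hYdef
    have hYn : 0 ≤ Y := by
      rw [hYdef]; apply mul_nonneg (by positivity) (hX q)
    calc 2 * Mv * δ' * (A q) ^ (-(1 + α)) * J1
          + 2 * Mv * (2 * p * (lamStar * δ')) * (A q) ^ (-(2 + α)) * J2
        = 2 * Mv * δ' * J1 * (A q) ^ (-(1 + α))
          + 4 * Mv * p * lamStar * δ' * J2 * (A q) ^ (-(2 + α)) := by ring
      _ ≤ 2 * Mv * δ' * J1 * Y
          + 4 * Mv * p * lamStar * δ' * J2 * (1 / (3 * lamStar) * Y) := by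
          apply add_le_add
          · apply mul_le_mul_of_nonneg_left (hAle q)
            apply mul_nonneg (by positivity) hJ1n
          · apply mul_le_mul_of_nonneg_left (hA2le q)
            apply mul_nonneg (by positivity) hJ2n
      _ ≤ CH * Mv * δ' * T ^ (1 + α) * X := by
          have hred : 4 * Mv * p * lamStar * δ' * J2 * (1 / (3 * lamStar) * Y)
              = 4 / 3 * p * Mv * δ' * J2 * Y := by
            field_simp
          rw [hred, hYdef, hCH_def]
          have hP : 0 ≤ p * Mv * δ' * J2 * (T ^ (1 + α) * X) := by
            apply mul_nonneg
            apply mul_nonneg (mul_nonneg (mul_nonneg hp.le hMvn) hδ') hJ2n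
            exact mul_nonneg hTα (hX q)
          nlinarith [hP]
  -- writing Dlin as two sums
  have hDlin : ∀ s : ES m, Dlin m α τ u v s =
      -(∑' q : {q : ℤ // q ≠ 0},
          ∫ t : ES m, (v s - v (s - t)) /
            (‖t‖ ^ 2 + (u s - u (s - t) - ((q : ℤ) : ℝ) / τ) ^ 2) ^ p) +
        ∑' q : {q : ℤ // q ≠ 0},
          ∫ t : ES m, (v s + v (s - t)) /
            (‖t‖ ^ 2 + (u s + u (s - t) - ((q : ℤ) : ℝ) / τ) ^ 2) ^ p := by
    intro s; rw [Dlin, hp_def]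
  -- per-s data
  have hcont_shift : ∀ s : ES m, Continuous fun t : ES m => v (s - t) := by
    intro s; exact hvcont.comp (continuous_const.sub continuous_id)
  have hcontu_shift : ∀ s : ES m, Continuous fun t : ES m => u (s - t) := by
    intro s; exact hucont.comp (continuous_const.sub continuous_id)
  have hf1 : ∀ s : ES m, Continuous fun t : ES m => v s - v (s - t) := fun s =>
    continuous_const.sub (hcont_shift s)
  have hf2 : ∀ s : ES m, Continuous fun t : ES m => v s + v (s - t) := fun s =>
    continuous_const.add (hcont_shift s)
  have hg1 : ∀ s : ES m, Continuous fun t : ES m => u s - u (s - t) := fun s =>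
    continuous_const.sub (hcontu_shift s)
  have hg2 : ∀ s : ES m, Continuous fun t : ES m => u s + u (s - t) := fun s =>
    continuous_const.add (hcontu_shift s)
  have hf1b : ∀ (s : ES m) (t : ES m), |v s - v (s - t)| ≤ 2 * Mv := by
    intro s t
    calc |v s - v (s - t)| ≤ |v s| + |v (s - t)| := abs_sub _ _
      _ ≤ 2 * Mv := by linarith [hvb s, hvb (s - t)]
  have hf2b : ∀ (s : ES m) (t : ES m), |v s + v (s - t)| ≤ 2 * Mv := by
    intro s t
    calc |v s + v (s - t)| ≤ |v s| + |v (s - t)| := abs_add_le _ _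
      _ ≤ 2 * Mv := by linarith [hvb s, hvb (s - t)]
  have hg1b : ∀ (s : ES m) (t : ES m), |u s - u (s - t)| ≤ 3 * lamStar := by
    intro s t
    calc |u s - u (s - t)| ≤ |u s| + |u (s - t)| := abs_sub _ _
      _ ≤ 3 * lamStar := by linarith [hub s, hub (s - t)]
  have hg2b : ∀ (s : ES m) (t : ES m), |u s + u (s - t)| ≤ 3 * lamStar := by
    intro s t
    calc |u s + u (s - t)| ≤ |u s| + |u (s - t)| := abs_add_le _ _
      _ ≤ 3 * lamStar := by linarith [hub s, hub (s - t)]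
  have coreA := fun s : ES m => core _ _ (hf1 s) (hg1 s) (hf1b s) (hg1b s)
  have coreB := fun s : ES m => core _ _ (hf2 s) (hg2 s) (hf2b s) (hg2b s)
  -- summability of the integral families
  have hsummand := fun (c' : ℝ) => (hsum.mul_left c')
  have hsumA : ∀ s : ES m, Summable (fun q : {q : ℤ // q ≠ 0} =>
      ∫ t : ES m, (v s - v (s - t)) /
        (‖t‖ ^ 2 + (u s - u (s - t) - ((q : ℤ) : ℝ) / τ) ^ 2) ^ p) := by
    intro s
    apply Summable.of_norm_bounded (hsummand (8 * J1 * Mv * T ^ (1 + α)))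
    intro q
    rw [Real.norm_eq_abs]
    exact (coreA s q).2
  have hsumB : ∀ s : ES m, Summable (fun q : {q : ℤ // q ≠ 0} =>
      ∫ t : ES m, (v s + v (s - t)) /
        (‖t‖ ^ 2 + (u s + u (s - t) - ((q : ℤ) : ℝ) / τ) ^ 2) ^ p) := by
    intro s
    apply Summable.of_norm_bounded (hsummand (8 * J1 * Mv * T ^ (1 + α)))
    intro q
    rw [Real.norm_eq_abs]
    exact (coreB s q).2
  have htsumA : ∀ s : ES m, |∑' q : {q : ℤ // q ≠ 0},
      ∫ t : ES m, (v s - v (s - t)) /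
        (‖t‖ ^ 2 + (u s - u (s - t) - ((q : ℤ) : ℝ) / τ) ^ 2) ^ p|
      ≤ 8 * J1 * Mv * T ^ (1 + α) * S := by
    intro s
    rw [← Real.norm_eq_abs]
    exact tsum_of_norm_bounded (hsum.hasSum.mul_left (8 * J1 * Mv * T ^ (1 + α)))
      (fun q => by rw [Real.norm_eq_abs]; exact (coreA s q).2)
  have htsumB : ∀ s : ES m, |∑' q : {q : ℤ // q ≠ 0},
      ∫ t : ES m, (v s + v (s - t)) /
        (‖t‖ ^ 2 + (u s + u (s - t) - ((q : ℤ) : ℝ) / τ) ^ 2) ^ p|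
      ≤ 8 * J1 * Mv * T ^ (1 + α) * S := by
    intro s
    rw [← Real.norm_eq_abs]
    exact tsum_of_norm_bounded (hsum.hasSum.mul_left (8 * J1 * Mv * T ^ (1 + α)))
      (fun q => by rw [Real.norm_eq_abs]; exact (coreB s q).2)
  have part1 : ∀ s : ES m, |Dlin m α τ u v s| ≤ csup * Mv * T ^ (1 + α) := by
    intro s
    rw [hDlin s]
    calc |(-(∑' q : {q : ℤ // q ≠ 0},
            ∫ t : ES m, (v s - v (s - t)) /
              (‖t‖ ^ 2 + (u s - u (s - t) - ((q : ℤ) : ℝ) / τ) ^ 2) ^ p)) +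
          ∑' q : {q : ℤ // q ≠ 0},
            ∫ t : ES m, (v s + v (s - t)) /
              (‖t‖ ^ 2 + (u s + u (s - t) - ((q : ℤ) : ℝ) / τ) ^ 2) ^ p|
        ≤ |∑' q : {q : ℤ // q ≠ 0},
            ∫ t : ES m, (v s - v (s - t)) /
              (‖t‖ ^ 2 + (u s - u (s - t) - ((q : ℤ) : ℝ) / τ) ^ 2) ^ p| +
          |∑' q : {q : ℤ // q ≠ 0},
            ∫ t : ES m, (v s + v (s - t)) /
              (‖t‖ ^ 2 + (u s + u (s - t) - ((q : ℤ) : ℝ) / τ) ^ 2) ^ p| := by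
          refine (abs_add_le _ _).trans ?_
          rw [abs_neg]
      _ ≤ 16 * J1 * Mv * T ^ (1 + α) * S := by linarith [htsumA s, htsumB s]
      _ = csup * Mv * T ^ (1 + α) := by rw [hcsup_def]; ring
  constructor
  · intro s
    have := part1 s
    have h2 : csup * (Mv * T ^ (1 + α)) ≤ (1 + 2 * csup + 2 * CH * S) * (Mv * T ^ (1 + α)) := by
      apply mul_le_mul_of_nonneg_right _ hMT
      linarith
    calc |Dlin m α τ u v s| ≤ csup * Mv * T ^ (1 + α) := this
      _ = csup * (Mv * T ^ (1 + α)) := by ring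
      _ ≤ (1 + 2 * csup + 2 * CH * S) * (Mv * T ^ (1 + α)) := h2
      _ = (1 + 2 * csup + 2 * CH * S) * Mv * T ^ (1 + α) := by ring
  · intro s sbar
    rcases eq_or_ne s sbar with rfl | hne
    · have hβα0 : β - α ≠ 0 := ne_of_gt (by linarith)
      simp [Real.zero_rpow hβα0]
    · set δ := ‖s - sbar‖ with hδdef
      have hδpos : 0 < δ := by
        rw [hδdef]; exact norm_pos_iff.mpr (sub_ne_zero.mpr hne)
      have hδβ : 0 ≤ δ ^ (β - α) := Real.rpow_nonneg hδpos.le _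
      -- pointwise numerator and u-difference bounds
      have hvdiff1 : ∀ t : ES m, |(v s - v (s - t)) - (v sbar - v (sbar - t))| ≤ 2 * Mv * δ := by
        intro t
        have h1 := hvlip s sbar
        have h2 := hvlip (s - t) (sbar - t)
        rw [sub_sub_sub_cancel_right] at h2
        calc |(v s - v (s - t)) - (v sbar - v (sbar - t))|
            = |(v s - v sbar) - (v (s - t) - v (sbar - t))| := by ring_nf
          _ ≤ |v s - v sbar| + |v (s - t) - v (sbar - t)| := abs_sub _ _
          _ ≤ 2 * Mv * δ := by rw [hδdef]; linarith
      have hvdiff2 : ∀ t : ES m, |(v s + v (s - t)) - (v sbar + v (sbar - t))| ≤ 2 * Mv * δ := by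
        intro t
        have h1 := hvlip s sbar
        have h2 := hvlip (s - t) (sbar - t)
        rw [sub_sub_sub_cancel_right] at h2
        calc |(v s + v (s - t)) - (v sbar + v (sbar - t))|
            = |(v s - v sbar) + (v (s - t) - v (sbar - t))| := by ring_nf
          _ ≤ |v s - v sbar| + |v (s - t) - v (sbar - t)| := abs_add_le _ _
          _ ≤ 2 * Mv * δ := by rw [hδdef]; linarith
      have hudiff1 : ∀ t : ES m, |(u s - u (s - t)) - (u sbar - u (sbar - t))| ≤ lamStar * δ := by
        intro t
        have h1 := hulip s sbar
        have h2 := hulip (s - t) (sbar - t)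
        rw [sub_sub_sub_cancel_right] at h2
        calc |(u s - u (s - t)) - (u sbar - u (sbar - t))|
            = |(u s - u sbar) - (u (s - t) - u (sbar - t))| := by ring_nf
          _ ≤ |u s - u sbar| + |u (s - t) - u (sbar - t)| := abs_sub _ _
          _ ≤ lamStar * δ := by rw [hδdef]; linarith
      have hudiff2 : ∀ t : ES m, |(u s + u (s - t)) - (u sbar + u (sbar - t))| ≤ lamStar * δ := by
        intro t
        have h1 := hulip s sbar
        have h2 := hulip (s - t) (sbar - t)
        rw [sub_sub_sub_cancel_right] at h2
        calc |(u s + u (s - t)) - (u sbar + u (sbar - t))|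
            = |(u s - u sbar) + (u (s - t) - u (sbar - t))| := by ring_nf
          _ ≤ |u s - u sbar| + |u (s - t) - u (sbar - t)| := abs_add_le _ _
          _ ≤ lamStar * δ := by rw [hδdef]; linarith
      have core2A := core2 δ hδpos.le _ _ _ _ (hf1 s) (hf1 sbar) (hg1 s) (hg1 sbar)
        (hf1b s) (hf1b sbar) hvdiff1 (hg1b s) (hg1b sbar) hudiff1
      have core2B := core2 δ hδpos.le _ _ _ _ (hf2 s) (hf2 sbar) (hg2 s) (hg2 sbar)
        (hf2b s) (hf2b sbar) hvdiff2 (hg2b s) (hg2b sbar) hudiff2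
      -- tsum difference bounds
      have htdA : |(∑' q : {q : ℤ // q ≠ 0},
          ∫ t : ES m, (v s - v (s - t)) /
            (‖t‖ ^ 2 + (u s - u (s - t) - ((q : ℤ) : ℝ) / τ) ^ 2) ^ p) -
          ∑' q : {q : ℤ // q ≠ 0},
          ∫ t : ES m, (v sbar - v (sbar - t)) /
            (‖t‖ ^ 2 + (u sbar - u (sbar - t) - ((q : ℤ) : ℝ) / τ) ^ 2) ^ p|
          ≤ CH * Mv * δ * T ^ (1 + α) * S := by
        rw [← Summable.tsum_sub (hsumA s) (hsumA sbar), ← Real.norm_eq_abs]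
        exact tsum_of_norm_bounded (hsum.hasSum.mul_left (CH * Mv * δ * T ^ (1 + α)))
          (fun q => by rw [Real.norm_eq_abs]; exact core2A q)
      have htdB : |(∑' q : {q : ℤ // q ≠ 0},
          ∫ t : ES m, (v s + v (s - t)) /
            (‖t‖ ^ 2 + (u s + u (s - t) - ((q : ℤ) : ℝ) / τ) ^ 2) ^ p) -
          ∑' q : {q : ℤ // q ≠ 0},
          ∫ t : ES m, (v sbar + v (sbar - t)) /
            (‖t‖ ^ 2 + (u sbar + u (sbar - t) - ((q : ℤ) : ℝ) / τ) ^ 2) ^ p|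
          ≤ CH * Mv * δ * T ^ (1 + α) * S := by
        rw [← Summable.tsum_sub (hsumB s) (hsumB sbar), ← Real.norm_eq_abs]
        exact tsum_of_norm_bounded (hsum.hasSum.mul_left (CH * Mv * δ * T ^ (1 + α)))
          (fun q => by rw [Real.norm_eq_abs]; exact core2B q)
      have hdiffbd : |Dlin m α τ u v s - Dlin m α τ u v sbar|
          ≤ 2 * CH * Mv * δ * T ^ (1 + α) * S := by
        rw [hDlin s, hDlin sbar]
        set a1 := ∑' q : {q : ℤ // q ≠ 0},
          ∫ t : ES m, (v s - v (s - t)) /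
            (‖t‖ ^ 2 + (u s - u (s - t) - ((q : ℤ) : ℝ) / τ) ^ 2) ^ p
        set a2 := ∑' q : {q : ℤ // q ≠ 0},
          ∫ t : ES m, (v sbar - v (sbar - t)) /
            (‖t‖ ^ 2 + (u sbar - u (sbar - t) - ((q : ℤ) : ℝ) / τ) ^ 2) ^ p
        set b1 := ∑' q : {q : ℤ // q ≠ 0},
          ∫ t : ES m, (v s + v (s - t)) /
            (‖t‖ ^ 2 + (u s + u (s - t) - ((q : ℤ) : ℝ) / τ) ^ 2) ^ p
        set b2 := ∑' q : {q : ℤ // q ≠ 0},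
          ∫ t : ES m, (v sbar + v (sbar - t)) /
            (‖t‖ ^ 2 + (u sbar + u (sbar - t) - ((q : ℤ) : ℝ) / τ) ^ 2) ^ p
        calc |(-a1 + b1) - (-a2 + b2)| = |(b1 - b2) - (a1 - a2)| := by ring_nf
          _ ≤ |b1 - b2| + |a1 - a2| := abs_sub _ _
          _ ≤ 2 * CH * Mv * δ * T ^ (1 + α) * S := by linarith [htdA, htdB]
      rcases le_or_gt δ 1 with hδ1 | hδ1
      · have hδle : δ ≤ δ ^ (β - α) := by
          calc δ = δ ^ (1:ℝ) := (Real.rpow_one δ).symm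
            _ ≤ δ ^ (β - α) :=
              Real.rpow_le_rpow_of_exponent_ge hδpos hδ1 (by linarith)
        have step : 2 * CH * Mv * δ * T ^ (1 + α) * S
            ≤ (1 + 2 * csup + 2 * CH * S) * Mv * T ^ (1 + α) * δ ^ (β - α) := by
          have hP : 0 ≤ CH * S * (Mv * T ^ (1 + α)) := mul_nonneg hCHSn hMT
          have h1 : 2 * CH * Mv * δ * T ^ (1 + α) * S
              ≤ 2 * CH * Mv * δ ^ (β - α) * T ^ (1 + α) * S := by
            have := mul_nonneg (mul_nonneg (mul_nonneg hCHn hMvn) hTα) hSn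
            nlinarith [hδle, this]
          refine h1.trans ?_
          have h2 : 0 ≤ Mv * T ^ (1 + α) * δ ^ (β - α) := mul_nonneg hMT hδβ
          nlinarith [h2, hcsupn, hCHSn]
        exact hdiffbd.trans step
      · have h1le : (1:ℝ) ≤ δ ^ (β - α) := by
          calc (1:ℝ) = 1 ^ (β - α) := (Real.one_rpow _).symm
            _ ≤ δ ^ (β - α) := Real.rpow_le_rpow (by norm_num) hδ1.le (by linarith)
        have hbd2 : |Dlin m α τ u v s - Dlin m α τ u v sbar|
            ≤ 2 * csup * Mv * T ^ (1 + α) := by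
          calc |Dlin m α τ u v s - Dlin m α τ u v sbar|
              ≤ |Dlin m α τ u v s| + |Dlin m α τ u v sbar| := abs_sub _ _
            _ ≤ 2 * csup * Mv * T ^ (1 + α) := by linarith [part1 s, part1 sbar]
        refine hbd2.trans ?_
        have h3 : 2 * csup * (Mv * T ^ (1 + α))
            ≤ (1 + 2 * csup + 2 * CH * S) * (Mv * T ^ (1 + α)) :=
          mul_le_mul_of_nonneg_right (by linarith) hMT
        have h4 : (1 + 2 * csup + 2 * CH * S) * (Mv * T ^ (1 + α))
            ≤ (1 + 2 * csup + 2 * CH * S) * (Mv * T ^ (1 + α)) * δ ^ (β - α) :=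
          le_mul_of_one_le_right (mul_nonneg (by linarith) hMT) h1le
        linarith [h3, h4]
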